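/- Let k > 0, λ be a k-ineffable' cardinal, and g: λ^k → λ^k. Then there exists an infinite set B ⊆ λ such that g has at most ot(k) regressive values on B^k. -/

import Mathlib

/-- `ot k`: the number of order types of elements of `ℕ^k`. -/
noncomputable def ot (k : ℕ) : ℕ :=
  Nat.card (Quot fun x y : Fin k → ℕ => ∀ i j, x i < x j ↔ y i < y j)

/-- `C` is a closed unbounded subset of `λ`: `sup C = λ`, and any limit
`x < λ` which is a sup of elements of `C` below it lies in `C`. -/
def IsClubIn (lam : Ordinal) (C : Set Ordinal) : Prop :=
  C ⊆ Set.Iio lam ∧ sSup C = lam ∧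
    ∀ x : Ordinal, x < lam → Order.IsSuccLimit x → sSup (C ∩ Set.Iio x) = x → x ∈ C

/-- `A` is a stationary subset of `λ`: it meets every club in `λ`. -/
def IsStationaryIn (lam : Ordinal) (A : Set Ordinal) : Prop :=
  A ⊆ Set.Iio lam ∧ ∀ C : Set Ordinal, IsClubIn lam C → (A ∩ C).Nonempty

/-- `λ` is `k`-ineffable′: every regressive `f : S_k(λ) → λ` is constant on
`S_k(A)` for some stationary `A ⊆ λ`. -/
def IsIneffablePrime (k : ℕ) (lam : Ordinal) : Prop :=
  ∀ f : Finset Ordinal → Ordinal,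
    (∀ A : Finset Ordinal, A.card = k → (∀ a ∈ A, a < lam) →
      f A < sInf (↑A : Set Ordinal) ∨ sInf (↑A : Set Ordinal) = 0) →
    ∃ S : Set Ordinal, IsStationaryIn lam S ∧
      ∃ c : Ordinal, ∀ A : Finset Ordinal, A.card = k → ↑A ⊆ S → f A = c

/-! ### Auxiliary material for the proof -/

namespace Stmt16Aux

open Ordinal Set

universe u

/-! #### Elementary facts about suprema of sets of ordinals -/

lemma sInf_coe_finset (A : Finset Ordinal) (h : A.Nonempty) :
    sInf (↑A : Set Ordinal) = A.min' h := by
  apply le_antisymm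
  · exact csInf_le (OrderBot.bddBelow _) (by exact_mod_cast A.min'_mem h)
  · exact le_csInf (by exact_mod_cast h.to_set) (fun b hb => A.min'_le b (by exact_mod_cast hb))

variable {lam : Ordinal.{u}}

lemma sSup_eq_of_unb (X : Set Ordinal) (hX : X ⊆ Set.Iio lam)
    (hlam : Order.IsSuccLimit lam) (unb : ∀ β < lam, ∃ b ∈ X, β ≤ b) : sSup X = lam := by
  have hbdd : BddAbove X := ⟨lam, fun b hb => (hX hb).le⟩
  have hne : X.Nonempty := by
    obtain ⟨b, hb, -⟩ := unb 0 hlam.pos; exact ⟨b, hb⟩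
  apply le_antisymm
  · exact csSup_le hne (fun b hb => (hX hb).le)
  · by_contra hlt
    push_neg at hlt
    obtain ⟨b, hb, hble⟩ := unb (sSup X + 1) (hlam.add_one_lt hlt)
    have : b ≤ sSup X := le_csSup hbdd hb
    exact absurd (hble.trans this) (by simp)

lemma unb_of_sSup (X : Set Ordinal) (hsup : sSup X = lam) (hlam : Order.IsSuccLimit lam) :
    ∀ β < lam, ∃ b ∈ X, β ≤ b := by
  intro β hβ
  by_contra hc
  push_neg at hc
  have hne : X.Nonempty := by
    rcases Set.eq_empty_or_nonempty X with h | h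
    · rw [h] at hsup; simp at hsup; exact absurd hsup.symm hlam.pos.ne'
    · exact h
  have : sSup X ≤ β := csSup_le hne (fun b hb => (hc b hb).le)
  rw [hsup] at this
  exact absurd this (not_le.2 hβ)

lemma ex_mem_lt_of_sSup (W : Set Ordinal) (x : Ordinal)
    (hsup : sSup W = x) (hx : x ≠ 0) : ∀ c < x, ∃ w ∈ W, c < w := by
  intro c hc
  by_contra h
  push_neg at h
  have hne : W.Nonempty := by
    rcases Set.eq_empty_or_nonempty W with hE | hN
    · rw [hE] at hsup; simp at hsup; exact absurd hsup.symm hx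
    · exact hN
  have : sSup W ≤ c := csSup_le hne h
  rw [hsup] at this
  exact absurd hc (not_lt.2 this)

/-! #### Clubs -/

lemma club_Iio (hlam : Order.IsSuccLimit lam) : IsClubIn lam (Set.Iio lam) := by
  refine ⟨le_refl _, sSup_eq_of_unb _ (le_refl _) hlam (fun β hβ => ⟨β, hβ, le_refl β⟩), ?_⟩
  exact fun x hx _ _ => hx

lemma club_inter_Ici (C : Set Ordinal) (hC : IsClubIn lam C) (hlam : Order.IsSuccLimit lam)
    {β : Ordinal} (hβ : β < lam) : IsClubIn lam (C ∩ Set.Ici β) := by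
  obtain ⟨hsub, hsup, hclosed⟩ := hC
  refine ⟨fun b hb => hsub hb.1, ?_, ?_⟩
  · apply sSup_eq_of_unb _ (fun b hb => hsub hb.1) hlam
    intro β' hβ'
    have hm : max β β' < lam := by
      rcases max_cases β β' with ⟨h1, _⟩ | ⟨h1, _⟩ <;> rw [h1] <;> assumption
    obtain ⟨b, hb, hble⟩ := unb_of_sSup C hsup hlam (max β β') hm
    exact ⟨b, ⟨hb, le_trans (le_max_left _ _) hble⟩, le_trans (le_max_right _ _) hble⟩
  · intro x hx hxl hsupx
    have hne : (C ∩ Set.Ici β ∩ Set.Iio x).Nonempty := by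
      rcases Set.eq_empty_or_nonempty (C ∩ Set.Ici β ∩ Set.Iio x) with hE | hN
      · rw [hE] at hsupx; simp at hsupx; exact absurd hsupx.symm hxl.pos.ne'
      · exact hN
    have hsub2 : C ∩ Set.Ici β ∩ Set.Iio x ⊆ C ∩ Set.Iio x := fun b hb => ⟨hb.1.1, hb.2⟩
    have hbdd : BddAbove (C ∩ Set.Iio x) := ⟨x, fun b hb => hb.2.le⟩
    have h1 : sSup (C ∩ Set.Iio x) ≤ x := csSup_le (hne.mono hsub2) (fun b hb => hb.2.le)
    have h2 : x ≤ sSup (C ∩ Set.Iio x) := by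
      have := csSup_le_csSup hbdd hne hsub2
      rwa [hsupx] at this
    have hxC : x ∈ C := hclosed x hx hxl (le_antisymm h1 h2)
    obtain ⟨b, hb⟩ := hne
    exact ⟨hxC, Set.mem_Ici.2 (le_trans hb.1.2 hb.2.le)⟩

/-! #### Stationary sets are unbounded -/

lemma inf_of_unb (hlam : Order.IsSuccLimit lam) (X : Set Ordinal) (hX : X ⊆ Set.Iio lam)
    (unb : ∀ β < lam, ∃ b ∈ X, β < b) : X.Infinite := by
  intro hfin
  obtain ⟨b0, hb0, -⟩ := unb 0 hlam.pos
  have hne : X.Nonempty := ⟨b0, hb0⟩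
  have hmem : sSup X ∈ X := hne.csSup_mem hfin
  obtain ⟨b, hb, hlt⟩ := unb (sSup X) (hX hmem)
  exact absurd (le_csSup hfin.bddAbove hb) (not_le.2 hlt)

lemma stat_meets_unb {T C : Set Ordinal} (hlam : Order.IsSuccLimit lam) (hT : IsStationaryIn lam T)
    (hC : IsClubIn lam C) : ∀ β < lam, ∃ b ∈ T ∩ C, β < b := by
  intro β hβ
  have hβ1 : β + 1 < lam := hlam.add_one_lt hβ
  obtain ⟨b, hbT, hbC, hbge⟩ := hT.2 _ (club_inter_Ici C hC hlam hβ1)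
  exact ⟨b, ⟨hbT, hbC⟩, lt_of_lt_of_le (lt_add_one β) hbge⟩

lemma stat_inter_infinite {T C : Set Ordinal} (hlam : Order.IsSuccLimit lam) (hT : IsStationaryIn lam T)
    (hC : IsClubIn lam C) : (T ∩ C).Infinite :=
  inf_of_unb hlam _ (fun b hb => hT.1 hb.1) (stat_meets_unb hlam hT hC)

variable {k : ℕ}

lemma stat_pick (hk : 0 < k) (hlam : Order.IsSuccLimit lam) {T : Set Ordinal}
    (hT : IsStationaryIn lam T) {β : Ordinal} (hβ : β < lam) :
    ∃ A : Finset Ordinal, A.card = k ∧ ↑A ⊆ T ∧ ∀ a ∈ A, β < a := by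
  have hX : (T ∩ (Set.Iio lam ∩ Set.Ici (β + 1))).Infinite :=
    stat_inter_infinite hlam hT (club_inter_Ici _ (club_Iio hlam) hlam (hlam.add_one_lt hβ))
  obtain ⟨A, hAsub, hAcard⟩ := hX.exists_subset_card_eq k
  refine ⟨A, hAcard, fun a ha => (hAsub ha).1, fun a ha => ?_⟩
  exact lt_of_lt_of_le (lt_add_one β) (hAsub ha).2.2

lemma pick_min (hk : 0 < k) {A : Finset Ordinal} (hAcard : A.card = k) :
    A.Nonempty := Finset.card_pos.1 (hAcard ▸ hk)

/-! #### λ = ω is impossible -/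

lemma not_ineffable_omega (hk : 0 < k) (hin : IsIneffablePrime k (Ordinal.omega0)) : False := by
  classical
  have hlam : Order.IsSuccLimit (Ordinal.omega0) := Ordinal.isSuccLimit_omega0
  set f : Finset Ordinal → Ordinal := fun A =>
    if h : ∃ o : Ordinal, sInf (↑A : Set Ordinal) = o + 1 then h.choose else 0 with hf
  have hreg : ∀ A : Finset Ordinal, A.card = k → (∀ a ∈ A, a < Ordinal.omega0) →
      f A < sInf (↑A : Set Ordinal) ∨ sInf (↑A : Set Ordinal) = 0 := by
    intro A _ _
    by_cases h : ∃ o : Ordinal, sInf (↑A : Set Ordinal) = o + 1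
    · left
      have h2 : f A = h.choose := by rw [hf]; simp only [dif_pos h]
      have h3 : sInf (↑A : Set Ordinal) = f A + 1 := by rw [h2]; exact h.choose_spec
      rw [h3, Ordinal.add_one_eq_succ]
      exact Order.lt_succ _
    · rw [hf]; simp only [dif_neg h]
      rcases eq_or_ne (sInf (↑A : Set Ordinal)) 0 with h0 | h0
      · right; exact h0
      · left; exact pos_iff_ne_zero.2 h0
  obtain ⟨T, hT, c, hc⟩ := hin f hreg
  obtain ⟨A1, hA1card, hA1T, hA1gt⟩ := stat_pick hk hlam hT hlam.pos
  have hA1ne := pick_min hk hA1card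
  set m1 := A1.min' hA1ne with hm1
  have hm1mem := A1.min'_mem hA1ne
  have hm1lt : m1 < Ordinal.omega0 := hT.1 (hA1T hm1mem)
  obtain ⟨A2, hA2card, hA2T, hA2gt⟩ := stat_pick hk hlam hT hm1lt
  have hA2ne := pick_min hk hA2card
  set m2 := A2.min' hA2ne with hm2
  have hm2mem := A2.min'_mem hA2ne
  have hm2lt : m2 < Ordinal.omega0 := hT.1 (hA2T hm2mem)
  have hm12 : m1 < m2 := hA2gt _ hm2mem
  have hsucc : ∀ (m : Ordinal), 0 < m → m < Ordinal.omega0 → ∃ o, m = o + 1 := by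
    intro m hpos hlt
    obtain ⟨n, rfl⟩ := Ordinal.lt_omega0.1 hlt
    cases n with
    | zero => simp at hpos
    | succ n => exact ⟨n, by push_cast; ring⟩
  have hs1 : ∃ o, sInf (↑A1 : Set Ordinal) = o + 1 := by
    rw [sInf_coe_finset A1 hA1ne]
    exact hsucc m1 (hA1gt _ hm1mem) hm1lt
  have hs2 : ∃ o, sInf (↑A2 : Set Ordinal) = o + 1 := by
    rw [sInf_coe_finset A2 hA2ne]
    exact hsucc m2 (lt_trans (hA1gt _ hm1mem) hm12) hm2lt
  have e1 : f A1 = c := hc A1 hA1card hA1T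
  have e2 : f A2 = c := hc A2 hA2card hA2T
  have v1 : sInf (↑A1 : Set Ordinal) = f A1 + 1 := by
    have h2 : f A1 = hs1.choose := by rw [hf]; simp only [dif_pos hs1]
    rw [h2]; exact hs1.choose_spec
  have v2 : sInf (↑A2 : Set Ordinal) = f A2 + 1 := by
    have h2 : f A2 = hs2.choose := by rw [hf]; simp only [dif_pos hs2]
    rw [h2]; exact hs2.choose_spec
  rw [e1] at v1; rw [e2] at v2
  rw [sInf_coe_finset A1 hA1ne] at v1
  rw [sInf_coe_finset A2 hA2ne] at v2
  rw [← hm1] at v1; rw [← hm2] at v2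
  rw [v1, v2] at hm12
  exact absurd hm12 (lt_irrefl _)

/-! #### κ is regular -/

lemma cof_ge (hk : 0 < k) {κ : Cardinal.{u}} (hκ : Cardinal.aleph0 ≤ κ)
    (hin : IsIneffablePrime k κ.ord) : κ ≤ (κ.ord).cof := by
  classical
  haveI : ∀ o : Ordinal.{u}, IsWellOrder o.ToType (· < ·) := fun o => isWellOrder_lt
  by_contra hcof
  push_neg at hcof
  set lam := κ.ord with hlamdef
  have hlam : Order.IsSuccLimit lam := Cardinal.isSuccLimit_ord hκ
  obtain ⟨S, hSunb', hScard⟩ := Order.exists_cof_eq lam.ToType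
  have hSunb : ∀ a, ∃ b ∈ S, ¬ b < a := fun a => (hSunb' a).imp fun b hb => ⟨hb.1, not_lt.2 hb.2⟩
  rw [← Ordinal.cof_type, type_toType] at hScard
  set rk : ↥S → Ordinal := fun s =>
    Ordinal.typein (Subrel ((· < ·) : lam.ToType → lam.ToType → Prop) (· ∈ S)) s with hrk
  set ordOf : lam.ToType → Ordinal := fun a =>
    Ordinal.typein ((· < ·) : lam.ToType → lam.ToType → Prop) a with hordOf
  set δ := Ordinal.type (Subrel ((· < ·) : lam.ToType → lam.ToType → Prop) (· ∈ S)) with hδ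
  have hδcard : δ.card = lam.cof := by rw [hδ, Ordinal.card_type, hScard]
  have hδlt : δ < lam := by
    rw [hlamdef, Cardinal.lt_ord, hδcard]
    exact hcof
  have hrklt : ∀ s : ↥S, rk s < δ := fun s => Ordinal.typein_lt_type _ s
  have hordlt : ∀ a : lam.ToType, ordOf a < lam := fun a => Ordinal.typein_lt_self a
  have hunb : ∀ β < lam, ∃ s : ↥S, β ≤ ordOf ↑s := by
    intro β hβ
    obtain ⟨a, ha⟩ := Ordinal.typein_surj ((· < ·) : lam.ToType → lam.ToType → Prop)
      (by rwa [type_toType])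
    obtain ⟨b, hbS, hba⟩ := hSunb a
    refine ⟨⟨b, hbS⟩, ?_⟩
    rw [← ha]
    exact not_lt.1 (fun hlt => hba ((Ordinal.typein_lt_typein _).1 hlt))
  set W : Finset Ordinal → Set Ordinal :=
    fun A => {o | ∃ s : ↥S, rk s = o ∧ sInf (↑A : Set Ordinal) ≤ ordOf ↑s} with hW
  set f : Finset Ordinal → Ordinal := fun A =>
    if δ < sInf (↑A : Set Ordinal) then sInf (W A) else 0 with hf
  have hWne : ∀ A : Finset Ordinal, sInf (↑A : Set Ordinal) < lam → (W A).Nonempty := by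
    intro A hA
    obtain ⟨s, hs⟩ := hunb _ hA
    exact ⟨rk s, s, rfl, hs⟩
  have hWmem : ∀ (A : Finset Ordinal) o, o ∈ W A → o < δ := by
    rintro A o ⟨s, rfl, -⟩
    exact hrklt s
  have hreg : ∀ A : Finset Ordinal, A.card = k → (∀ a ∈ A, a < lam) →
      f A < sInf (↑A : Set Ordinal) ∨ sInf (↑A : Set Ordinal) = 0 := by
    intro A hcard hbnd
    rw [hf]
    by_cases h : δ < sInf (↑A : Set Ordinal)
    · left
      simp only [if_pos h]
      have hne := pick_min hk hcard
      have hsl : sInf (↑A : Set Ordinal) < lam := by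
        rw [sInf_coe_finset A hne]
        exact hbnd _ (A.min'_mem hne)
      exact lt_trans (hWmem A _ (csInf_mem (hWne A hsl))) h
    · simp only [if_neg h]
      rcases eq_or_ne (sInf (↑A : Set Ordinal)) 0 with h0 | h0
      · right; exact h0
      · left; exact pos_iff_ne_zero.2 h0
  obtain ⟨T, hT, c, hc⟩ := hin f hreg
  obtain ⟨A1, hA1card, hA1T, hA1gt⟩ := stat_pick hk hlam hT hδlt
  have hA1ne := pick_min hk hA1card
  have hs1 : δ < sInf (↑A1 : Set Ordinal) := by
    rw [sInf_coe_finset A1 hA1ne]; exact hA1gt _ (A1.min'_mem hA1ne)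
  have hsl1 : sInf (↑A1 : Set Ordinal) < lam := by
    rw [sInf_coe_finset A1 hA1ne]; exact hT.1 (hA1T (A1.min'_mem hA1ne))
  have hcW1 : c ∈ W A1 := by
    have : f A1 = c := hc A1 hA1card hA1T
    rw [hf] at this; simp only [if_pos hs1] at this
    rw [← this]
    exact csInf_mem (hWne A1 hsl1)
  obtain ⟨s1, hrks1, hords1⟩ := hcW1
  have hmax : max δ (ordOf ↑s1) < lam := by
    rcases max_cases δ (ordOf ↑s1) with ⟨h1, _⟩ | ⟨h1, _⟩ <;> rw [h1]
    · exact hδlt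
    · exact hordlt _
  obtain ⟨A2, hA2card, hA2T, hA2gt⟩ := stat_pick hk hlam hT hmax
  have hA2ne := pick_min hk hA2card
  have hs2 : max δ (ordOf ↑s1) < sInf (↑A2 : Set Ordinal) := by
    rw [sInf_coe_finset A2 hA2ne]; exact hA2gt _ (A2.min'_mem hA2ne)
  have hsl2 : sInf (↑A2 : Set Ordinal) < lam := by
    rw [sInf_coe_finset A2 hA2ne]; exact hT.1 (hA2T (A2.min'_mem hA2ne))
  have hcW2 : c ∈ W A2 := by
    have : f A2 = c := hc A2 hA2card hA2T
    rw [hf] at this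
    simp only [if_pos (lt_of_le_of_lt (le_max_left _ _) hs2)] at this
    rw [← this]
    exact csInf_mem (hWne A2 hsl2)
  obtain ⟨s2, hrks2, hords2⟩ := hcW2
  have hseq : s2 = s1 := Ordinal.typein_injective _ (hrks2.trans hrks1.symm)
  rw [hseq] at hords2
  exact absurd (lt_of_le_of_lt hords2 (lt_of_le_of_lt (le_max_right _ _) hs2)) (lt_irrefl _)

/-! #### order patterns -/

def pat {α : Type*} [LinearOrder α] (x : Fin k → α) : Fin k → ℕ :=
  fun i => (Finset.univ.filter (fun j => x j < x i)).card

lemma pat_lt_iff {α : Type*} [LinearOrder α] (x : Fin k → α) (i j : Fin k) :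
    pat x i < pat x j ↔ x i < x j := by
  constructor
  · intro h
    rcases lt_trichotomy (x i) (x j) with h1 | h1 | h1
    · exact h1
    · exfalso
      have : pat x i = pat x j := by
        unfold pat; congr 1; apply Finset.filter_congr; intro l _; rw [h1]
      omega
    · exfalso
      have hss : (Finset.univ.filter (fun l => x l < x j)) ⊆
          (Finset.univ.filter (fun l => x l < x i)) := by
        intro l hl
        simp only [Finset.mem_filter, Finset.mem_univ, true_and] at *
        exact hl.trans h1
      have : pat x j ≤ pat x i := Finset.card_le_card hss
      omega
  · intro h1
    have hss : (Finset.univ.filter (fun l => x l < x i)) ⊂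
        (Finset.univ.filter (fun l => x l < x j)) := by
      refine ⟨fun l hl => ?_, fun hsub => ?_⟩
      · simp only [Finset.mem_filter, Finset.mem_univ, true_and] at *
        exact hl.trans h1
      · have := hsub (by simp [h1] : i ∈ Finset.univ.filter (fun l => x l < x j))
        simp at this
    exact Finset.card_lt_card hss

lemma pat_lt_k {α : Type*} [LinearOrder α] (x : Fin k → α) (i : Fin k) :
    pat x i < k := by
  have hss : (Finset.univ.filter (fun j => x j < x i)) ⊂ Finset.univ := by
    refine ⟨Finset.subset_univ _, fun hsub => ?_⟩
    have := hsub (Finset.mem_univ i)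
    simp at this
  have := Finset.card_lt_card hss
  simpa [pat] using this

lemma finite_quot :
    Finite (Quot fun x y : Fin k → ℕ => ∀ i j, x i < x j ↔ y i < y j) := by
  apply Finite.of_surjective
    (fun σ : Fin k → Fin k =>
      Quot.mk (fun x y : Fin k → ℕ => ∀ i j, x i < x j ↔ y i < y j) (fun i => (σ i : ℕ)))
  intro q
  induction q using Quot.ind with
  | _ z =>
    refine ⟨fun i => ⟨pat z i, pat_lt_k z i⟩, ?_⟩
    apply Quot.sound
    intro i j
    exact pat_lt_iff z i j

/-! #### counting ranks in finite sets -/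

lemma card_filter_lt_fin (j : Fin k) :
    (Finset.univ.filter (fun j' : Fin k => j' < j)).card = (j : ℕ) := by
  apply Finset.card_eq_of_bijective (fun i hi => ⟨i, hi.trans j.isLt⟩)
  · intro a ha
    simp only [Finset.mem_filter, Finset.mem_univ, true_and, Fin.lt_def] at ha
    exact ⟨a.val, ha, Fin.ext rfl⟩
  · intro i hi
    simp only [Finset.mem_filter, Finset.mem_univ, true_and, Fin.lt_def]
    exact hi
  · intro i j' hi hj' h
    simpa using congrArg Fin.val h

lemma rank_orderIsoOfFin {α : Type*} [LinearOrder α] (A : Finset α) (h : A.card = k)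
    (j : Fin k) :
    (A.filter (fun b => b < (A.orderIsoOfFin h j : α))).card = (j : ℕ) := by
  classical
  have himg : A.filter (fun b => b < (A.orderIsoOfFin h j : α)) =
      (Finset.univ.filter (fun j' : Fin k => j' < j)).image
        (fun j' => (A.orderIsoOfFin h j' : α)) := by
    ext b
    simp only [Finset.mem_filter, Finset.mem_image, Finset.mem_univ, true_and]
    constructor
    · rintro ⟨hbA, hblt⟩
      refine ⟨(A.orderIsoOfFin h).symm ⟨b, hbA⟩, ?_, ?_⟩
      · rw [← OrderIso.lt_iff_lt (A.orderIsoOfFin h), OrderIso.apply_symm_apply]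
        exact_mod_cast hblt
      · rw [OrderIso.apply_symm_apply]
    · rintro ⟨j', hj', rfl⟩
      refine ⟨(A.orderIsoOfFin h j').2, ?_⟩
      exact_mod_cast (OrderIso.lt_iff_lt (A.orderIsoOfFin h)).2 hj'
  rw [himg, Finset.card_image_of_injective _ (fun a b hab => ?_), card_filter_lt_fin]
  exact (A.orderIsoOfFin h).injective (Subtype.coe_injective hab)

lemma image_card_eq (x₁ x₂ : Fin k → Ordinal) (heq : ∀ i j, x₁ i = x₁ j ↔ x₂ i = x₂ j)
    (J : Finset (Fin k)) : (J.image x₁).card = (J.image x₂).card := by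
  classical
  apply Finset.card_bij (fun a ha => x₂ (Finset.mem_image.1 ha).choose)
  · intro a ha
    exact Finset.mem_image_of_mem _ (Finset.mem_image.1 ha).choose_spec.1
  · intro a ha b hb hab
    obtain ⟨hja, hxa⟩ := (Finset.mem_image.1 ha).choose_spec
    obtain ⟨hjb, hxb⟩ := (Finset.mem_image.1 hb).choose_spec
    rw [← hxa, ← hxb]
    exact (heq _ _).2 hab
  · intro b hb
    obtain ⟨j, hj, rfl⟩ := Finset.mem_image.1 hb
    refine ⟨x₁ j, Finset.mem_image_of_mem _ hj, ?_⟩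
    have hspec := (Finset.mem_image.1 (Finset.mem_image_of_mem x₁ hj)).choose_spec
    exact (heq _ _).1 hspec.2

/-! #### encoding tables of tuples below λ by single ordinals below λ -/

noncomputable def foldP (P : ↥(Set.Iio lam) × ↥(Set.Iio lam) ≃ ↥(Set.Iio lam))
    (z : ↥(Set.Iio lam)) :
    ∀ m : ℕ, (Fin m → ↥(Set.Iio lam)) → ↥(Set.Iio lam)
  | 0, _ => z
  | m + 1, f => P (f 0, foldP P z m (f ∘ Fin.succ))

lemma foldP_inj (P : ↥(Set.Iio lam) × ↥(Set.Iio lam) ≃ ↥(Set.Iio lam)) (z : ↥(Set.Iio lam)) :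
    ∀ m (f f' : Fin m → ↥(Set.Iio lam)), foldP P z m f = foldP P z m f' → f = f' := by
  intro m
  induction m with
  | zero => intro f f' _; funext i; exact absurd i.2 (Nat.not_lt_zero _)
  | succ m ih =>
    intro f f' h
    simp only [foldP] at h
    have h2 := P.injective (Subtype.ext (congrArg Subtype.val h))
    have h0 : f 0 = f' 0 := congrArg Prod.fst h2
    have hs : f ∘ Fin.succ = f' ∘ Fin.succ := ih _ _ (congrArg Prod.snd h2)
    funext i
    rcases Fin.eq_zero_or_eq_succ i with rfl | ⟨j, rfl⟩
    · exact h0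
    · exact congrFun hs j

lemma foldP_bound (P : ↥(Set.Iio lam) × ↥(Set.Iio lam) ≃ ↥(Set.Iio lam)) (z : ↥(Set.Iio lam))
    {α : Ordinal} (hz : (z : Ordinal) < α)
    (hP : ∀ a b : ↥(Set.Iio lam), (a : Ordinal) < α → (b : Ordinal) < α →
      ((P (a, b)) : Ordinal) < α) :
    ∀ m (f : Fin m → ↥(Set.Iio lam)), (∀ i, ((f i : Ordinal)) < α) →
      ((foldP P z m f : Ordinal)) < α := by
  intro m
  induction m with
  | zero => intro f _; exact hz
  | succ m ih =>
    intro f hf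
    exact hP _ _ (hf 0) (ih _ (fun i => hf i.succ))

noncomputable def codeOpt (P : ↥(Set.Iio lam) × ↥(Set.Iio lam) ≃ ↥(Set.Iio lam))
    (z one : ↥(Set.Iio lam)) (kk : ℕ) :
    Option (Fin kk → ↥(Set.Iio lam)) → ↥(Set.Iio lam)
  | none => P (z, z)
  | some y => P (one, foldP P z kk y)

lemma codeOpt_inj (P : ↥(Set.Iio lam) × ↥(Set.Iio lam) ≃ ↥(Set.Iio lam)) (z one : ↥(Set.Iio lam))
    (hzo : z ≠ one) (kk : ℕ) (o o' : Option (Fin kk → ↥(Set.Iio lam)))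
    (h : codeOpt P z one kk o = codeOpt P z one kk o') : o = o' := by
  match o, o' with
  | none, none => rfl
  | none, some y' =>
    exact absurd (congrArg Prod.fst (P.injective h)) hzo
  | some y, none =>
    exact absurd (congrArg Prod.fst (P.injective h)).symm hzo
  | some y, some y' =>
    have h2 := P.injective h
    have := foldP_inj P z kk y y' (congrArg Prod.snd h2)
    rw [this]

lemma codeOpt_bound (P : ↥(Set.Iio lam) × ↥(Set.Iio lam) ≃ ↥(Set.Iio lam))
    (z one : ↥(Set.Iio lam)) {α : Ordinal} (hz : (z : Ordinal) < α) (hone : (one : Ordinal) < α)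
    (hP : ∀ a b : ↥(Set.Iio lam), (a : Ordinal) < α → (b : Ordinal) < α →
      ((P (a, b)) : Ordinal) < α)
    (kk : ℕ) (o : Option (Fin kk → ↥(Set.Iio lam)))
    (ho : ∀ y, o = some y → ∀ i, ((y i : Ordinal)) < α) :
    ((codeOpt P z one kk o : Ordinal)) < α := by
  match o with
  | none => exact hP _ _ hz hz
  | some y => exact hP _ _ hone (foldP_bound P z hz hP kk y (ho y rfl))

abbrev DD (k : ℕ) (lam : Ordinal.{u}) := (Fin k → Fin k) → Option (Fin k → ↥(Set.Iio lam))

noncomputable def codeD (P : ↥(Set.Iio lam) × ↥(Set.Iio lam) ≃ ↥(Set.Iio lam))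
    (z one : ↥(Set.Iio lam)) (v : DD k lam) : ↥(Set.Iio lam) :=
  foldP P z (Fintype.card (Fin k → Fin k))
    (fun p => codeOpt P z one k (v ((Fintype.equivFin (Fin k → Fin k)).symm p)))

lemma codeD_inj (P : ↥(Set.Iio lam) × ↥(Set.Iio lam) ≃ ↥(Set.Iio lam)) (z one : ↥(Set.Iio lam))
    (hzo : z ≠ one) (v v' : DD k lam) (h : codeD P z one v = codeD P z one v') : v = v' := by
  have h2 := foldP_inj P z _ _ _ h
  funext σ
  have h3 := congrFun h2 ((Fintype.equivFin (Fin k → Fin k)) σ)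
  simp only [Equiv.symm_apply_apply] at h3
  exact codeOpt_inj P z one hzo k _ _ h3

lemma codeD_bound (P : ↥(Set.Iio lam) × ↥(Set.Iio lam) ≃ ↥(Set.Iio lam)) (z one : ↥(Set.Iio lam))
    {α : Ordinal} (hz : (z : Ordinal) < α) (hone : (one : Ordinal) < α)
    (hP : ∀ a b : ↥(Set.Iio lam), (a : Ordinal) < α → (b : Ordinal) < α →
      ((P (a, b)) : Ordinal) < α)
    (v : DD k lam) (hv : ∀ σ y, v σ = some y → ∀ i, ((y i : Ordinal)) < α) :
    ((codeD P z one v : Ordinal)) < α := by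
  apply foldP_bound P z hz hP
  intro p
  exact codeOpt_bound P z one hz hone hP k _ (fun y hy i => hv _ y hy i)

/-! #### the club of closure points of a pairing -/

abbrev Cset (κ : Cardinal.{u}) (P : ↥(Set.Iio κ.ord) × ↥(Set.Iio κ.ord) ≃ ↥(Set.Iio κ.ord)) :
    Set Ordinal.{u} :=
  {α | α < κ.ord ∧ 1 < α ∧ ∀ a b : ↥(Set.Iio κ.ord),
    (a : Ordinal) < α → (b : Ordinal) < α → ((P (a, b)) : Ordinal) < α}

lemma exists_pairing {κ : Cardinal.{u}} (hκ : Cardinal.aleph0 ≤ κ) :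
    Nonempty (↥(Set.Iio κ.ord) × ↥(Set.Iio κ.ord) ≃ ↥(Set.Iio κ.ord)) := by
  apply Cardinal.eq.1
  have hmk : Cardinal.mk (↥(Set.Iio κ.ord)) = Cardinal.lift.{u + 1} κ := by
    rw [Ordinal.mk_Iio_ordinal, Cardinal.card_ord]
  have hinf : Cardinal.aleph0 ≤ Cardinal.mk (↥(Set.Iio κ.ord)) := by
    rw [hmk]
    rwa [Cardinal.aleph0_le_lift]
  rw [Cardinal.mk_prod]
  simp only [Cardinal.lift_id]
  exact Cardinal.mul_eq_self hinf

lemma clubC {κ : Cardinal.{u}} (hκ : Cardinal.aleph0 ≤ κ) (hℵ : Cardinal.aleph0 < κ)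
    (hcof : κ ≤ (κ.ord).cof)
    (P : ↥(Set.Iio κ.ord) × ↥(Set.Iio κ.ord) ≃ ↥(Set.Iio κ.ord)) :
    IsClubIn κ.ord (Cset κ P) := by
  classical
  haveI : ∀ o : Ordinal.{u}, IsWellOrder o.ToType (· < ·) := fun o => isWellOrder_lt
  have hlam : Order.IsSuccLimit (κ.ord) := Cardinal.isSuccLimit_ord hκ
  set toI : ∀ γ : Ordinal.{u}, γ < κ.ord → γ.ToType → ↥(Set.Iio κ.ord) := fun γ hγ t =>
    ⟨Ordinal.typein ((· < ·) : γ.ToType → γ.ToType → Prop) t,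
      lt_trans (Ordinal.typein_lt_self t) hγ⟩ with htoI
  set H : Ordinal.{u} → Ordinal.{u} := fun γ =>
    if hγ : γ < κ.ord then
      (⨆ p : γ.ToType × γ.ToType, (((P (toI γ hγ p.1, toI γ hγ p.2)) : Ordinal) + 1)) ⊔ (γ + 1)
    else 0 with hH
  have hrange_bdd : ∀ (γ : Ordinal) (hγ : γ < κ.ord), BddAbove (Set.range
      (fun p : γ.ToType × γ.ToType => (((P (toI γ hγ p.1, toI γ hγ p.2)) : Ordinal) + 1))) := by
    intro γ hγ
    refine ⟨κ.ord, ?_⟩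
    rintro x ⟨p, rfl⟩
    exact (hlam.add_one_lt (P _).2).le
  have hHlt : ∀ γ < κ.ord, H γ < κ.ord := by
    intro γ hγ
    rw [hH]
    simp only [dif_pos hγ]
    apply max_lt _ (hlam.add_one_lt hγ)
    apply Ordinal.iSup_lt_ord
    · have hmk : Cardinal.mk (γ.ToType × γ.ToType) = γ.card * γ.card := by
        rw [Cardinal.mk_prod, Cardinal.mk_toType]
        simp only [Cardinal.lift_id]
      rw [hmk]
      have hcard : γ.card < κ := Cardinal.lt_ord.1 hγ
      exact lt_of_lt_of_le (Cardinal.mul_lt_of_lt hκ hcard hcard) hcof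
    · intro p
      exact hlam.add_one_lt (P _).2
  have hHge : ∀ γ < κ.ord, γ + 1 ≤ H γ := by
    intro γ hγ
    rw [hH]
    simp only [dif_pos hγ]
    exact le_max_right _ _
  constructor
  · intro α hα; exact hα.1
  constructor
  · -- unbounded
    apply sSup_eq_of_unb (Cset κ P) (fun α hα => hα.1) hlam
    intro β hβ
    set it : ℕ → Ordinal := fun n => n.rec (β ⊔ 2) (fun _ ih => H ih) with hit
    have hit0 : it 0 = β ⊔ 2 := rfl
    have hitS : ∀ n, it (n + 1) = H (it n) := fun n => rfl
    have h2lam : (2 : Ordinal) < κ.ord := by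
      have := Ordinal.natCast_lt_of_isSuccLimit hlam 2
      simpa using this
    have hitlt : ∀ n, it n < κ.ord := by
      intro n
      induction n with
      | zero => rw [hit0]; exact max_lt hβ h2lam
      | succ n ih => rw [hitS]; exact hHlt _ ih
    have hitmono : ∀ n, it n < it (n + 1) := by
      intro n
      rw [hitS]
      exact lt_of_lt_of_le (Order.lt_succ _)
        (by rw [← Ordinal.add_one_eq_succ]; exact hHge _ (hitlt n))
    have hmono : Monotone it := monotone_nat_of_le_succ (fun n => (hitmono n).le)
    set α := ⨆ n, it n with hα
    have hitbdd : BddAbove (Set.range it) := ⟨κ.ord, by rintro x ⟨n, rfl⟩; exact (hitlt n).le⟩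
    have hle : ∀ n, it n ≤ α := fun n => le_ciSup hitbdd n
    have hαlt : α < κ.ord := by
      rw [hα]
      have hmkn : Cardinal.lift.{u, 0} (Cardinal.mk ℕ) < (κ.ord).cof := by
        rw [Cardinal.mk_nat, Cardinal.lift_aleph0]
        exact lt_of_lt_of_le hℵ hcof
      exact Ordinal.iSup_lt_ord_lift (f := it) hmkn hitlt
    have hexn : ∀ c < α, ∃ n, c < it n := by
      intro c hc
      by_contra h
      push_neg at h
      exact absurd (ciSup_le h) (not_le.2 hc)
    refine ⟨α, ⟨hαlt, ?_, ?_⟩, le_trans (le_max_left _ _) (le_trans (le_of_eq hit0.symm) (hle 0))⟩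
    · calc (1 : Ordinal) < 2 := by norm_num
        _ ≤ β ⊔ 2 := le_max_right _ _
        _ = it 0 := hit0.symm
        _ ≤ α := hle 0
    · intro a b ha hb
      obtain ⟨na, hna⟩ := hexn _ ha
      obtain ⟨nb, hnb⟩ := hexn _ hb
      set n := max na nb with hn
      have ha' : (a : Ordinal) < it n := lt_of_lt_of_le hna (hmono (le_max_left _ _))
      have hb' : (b : Ordinal) < it n := lt_of_lt_of_le hnb (hmono (le_max_right _ _))
      set γ := it n with hγdef
      have hγ : γ < κ.ord := hitlt n
      obtain ⟨t1, ht1⟩ : ∃ t, Ordinal.typein ((· < ·) : γ.ToType → γ.ToType → Prop) t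
          = (a : Ordinal) :=
        Ordinal.typein_surj _ (by rw [type_toType]; exact ha')
      obtain ⟨t2, ht2⟩ : ∃ t, Ordinal.typein ((· < ·) : γ.ToType → γ.ToType → Prop) t
          = (b : Ordinal) :=
        Ordinal.typein_surj _ (by rw [type_toType]; exact hb')
      have hta : toI γ hγ t1 = a := Subtype.ext ht1
      have htb : toI γ hγ t2 = b := Subtype.ext ht2
      have hcomp : ((P (a, b)) : Ordinal) + 1 ≤ H γ := by
        rw [hH]
        simp only [dif_pos hγ]
        refine le_trans ?_ (le_max_left _ _)
        have := le_ciSup (hrange_bdd γ hγ) (t1, t2)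
        rwa [hta, htb] at this
      calc ((P (a, b)) : Ordinal) < ((P (a, b)) : Ordinal) + 1 := by
            rw [Ordinal.add_one_eq_succ]; exact Order.lt_succ _
        _ ≤ H γ := hcomp
        _ = it (n + 1) := (hitS n).symm
        _ ≤ α := hle (n + 1)
  · -- closed
    intro x hx hxl hsupx
    have hex := ex_mem_lt_of_sSup _ _ hsupx hxl.pos.ne'
    refine ⟨hx, ?_, ?_⟩
    · obtain ⟨w, hw, hw2⟩ := hex 1 (Ordinal.one_lt_of_isSuccLimit hxl)
      exact lt_trans hw2 hw.2
    · intro a b ha hb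
      obtain ⟨w1, hw1, hlt1⟩ := hex _ ha
      obtain ⟨w2, hw2, hlt2⟩ := hex _ hb
      rcases le_total w1 w2 with h | h
      · exact lt_trans (hw2.1.2.2 a b (lt_of_lt_of_le hlt1 h) hlt2) hw2.2
      · exact lt_trans (hw1.1.2.2 a b hlt1 (lt_of_lt_of_le hlt2 h)) hw1.2

/-! #### the table associated with a finite set -/

open scoped Classical in
noncomputable def xOf (A : Finset Ordinal) (hc : A.card = k) (σ : Fin k → Fin k) :
    Fin k → Ordinal :=
  fun i => ((A.orderIsoOfFin hc) (σ i) : Ordinal)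

open scoped Classical in
noncomputable def vOf (lam : Ordinal.{u}) (g : (Fin k → Ordinal.{u}) → (Fin k → Ordinal.{u}))
    (hg : ∀ x : Fin k → Ordinal, (∀ i, x i < lam) → ∀ i, g x i < lam)
    (A : Finset Ordinal) : DD k lam :=
  fun σ =>
    if hc : A.card = k then
      if h2 : (∀ i, xOf A hc σ i < lam) ∧
          (⨆ i, g (xOf A hc σ) i) < sInf (↑A : Set Ordinal) then
        some (fun i => ⟨g (xOf A hc σ) i, hg _ h2.1 i⟩)
      else none
    else none

lemma le_iSup_ord (x : Fin k → Ordinal) (i : Fin k) : x i ≤ ⨆ j, x j :=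
  le_ciSup (Set.Finite.bddAbove (Set.finite_range x)) i

lemma vOf_bound (lam : Ordinal.{u}) (g : (Fin k → Ordinal.{u}) → (Fin k → Ordinal.{u}))
    (hg : ∀ x : Fin k → Ordinal, (∀ i, x i < lam) → ∀ i, g x i < lam)
    (A : Finset Ordinal) (σ : Fin k → Fin k) (y : Fin k → ↥(Set.Iio lam))
    (h : vOf lam g hg A σ = some y) :
    ∀ i, (y i : Ordinal) < sInf (↑A : Set Ordinal) := by
  classical
  unfold vOf at h
  split_ifs at h with hc h2
  intro i
  have := congrFun (Option.some.inj h) i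
  rw [← this]
  exact lt_of_le_of_lt (le_iSup_ord (fun i => g (xOf A hc σ) i) i) h2.2

lemma vOf_eval (lam : Ordinal.{u}) (g : (Fin k → Ordinal.{u}) → (Fin k → Ordinal.{u}))
    (hg : ∀ x : Fin k → Ordinal, (∀ i, x i < lam) → ∀ i, g x i < lam)
    (A : Finset Ordinal) (hcard : A.card = k) (σ : Fin k → Fin k) (x : Fin k → Ordinal)
    (hxof : xOf A hcard σ = x) (hxlt : ∀ i, x i < lam)
    (hreg2 : (⨆ i, g x i) < sInf (↑A : Set Ordinal)) :
    vOf lam g hg A σ = some (fun i => ⟨g x i, hg x hxlt i⟩) := by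
  classical
  subst hxof
  unfold vOf
  rw [dif_pos hcard, dif_pos (⟨hxlt, hreg2⟩ :
    (∀ i, xOf A hcard σ i < lam) ∧ (⨆ i, g (xOf A hcard σ) i) < sInf (↑A : Set Ordinal))]

lemma iInf_attained (hk : 0 < k) (x : Fin k → Ordinal) :
    ∃ i0 : Fin k, x i0 = (⨅ i, x i) ∧ ∀ j, x i0 ≤ x j := by
  have : Nonempty (Fin k) := ⟨⟨0, hk⟩⟩
  obtain ⟨i0, hi0⟩ := Finite.exists_min x
  exact ⟨i0, le_antisymm (le_ciInf hi0) (ciInf_le (OrderBot.bddBelow _) i0), hi0⟩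

end Stmt16Aux

open Stmt16Aux

/-- Lemma 4.10: if `λ` is `k`-ineffable′ then any `g : λ^k → λ^k` has at most
`ot k` regressive values on `B^k` for some infinite `B ⊆ λ`. -/
theorem stmt_16 (k : ℕ) (hk : 0 < k) (κ : Cardinal)
    (hκ : Cardinal.aleph0 ≤ κ) (hin : IsIneffablePrime k κ.ord)
    (g : (Fin k → Ordinal) → (Fin k → Ordinal))
    (hg : ∀ x : Fin k → Ordinal, (∀ i, x i < κ.ord) → ∀ i, g x i < κ.ord) :
    ∃ B : Set Ordinal, B.Infinite ∧ B ⊆ Set.Iio κ.ord ∧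
      {y : Fin k → Ordinal | ∃ x : Fin k → Ordinal, (∀ i, x i ∈ B) ∧
        g x = y ∧ (⨆ i, y i) < ⨅ i, x i}.Finite ∧
      {y : Fin k → Ordinal | ∃ x : Fin k → Ordinal, (∀ i, x i ∈ B) ∧
        g x = y ∧ (⨆ i, y i) < ⨅ i, x i}.ncard ≤ ot k := by
  classical
  have hlam : Order.IsSuccLimit (κ.ord) := Cardinal.isSuccLimit_ord hκ
  -- κ is uncountable
  have hℵ : Cardinal.aleph0 < κ := by
    rcases lt_or_eq_of_le hκ with h | h
    · exact h
    · exfalso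
      rw [← h] at hin
      rw [Cardinal.ord_aleph0] at hin
      exact not_ineffable_omega hk hin
  -- κ is regular
  have hcof : κ ≤ (κ.ord).cof := cof_ge hk hκ hin
  -- a pairing function and its club of closure points
  obtain ⟨P⟩ := exists_pairing (κ := κ) hκ
  have hC : IsClubIn κ.ord (Cset κ P) := clubC hκ hℵ hcof P
  have h0lam : (0 : Ordinal) < κ.ord := hlam.pos
  have h1lam : (1 : Ordinal) < κ.ord := Ordinal.one_lt_of_isSuccLimit hlam
  set z : ↥(Set.Iio κ.ord) := ⟨0, h0lam⟩ with hz
  set one : ↥(Set.Iio κ.ord) := ⟨1, h1lam⟩ with hone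
  have hzo : z ≠ one := by
    intro h
    have := congrArg Subtype.val h
    simp [hz, hone] at this
  -- the regressive function
  set f : Finset Ordinal → Ordinal := fun A =>
    if ((codeD P z one (vOf κ.ord g hg A)) : Ordinal) < sInf (↑A : Set Ordinal)
    then ((codeD P z one (vOf κ.ord g hg A)) : Ordinal) else 0 with hf
  have hreg : ∀ A : Finset Ordinal, A.card = k → (∀ a ∈ A, a < κ.ord) →
      f A < sInf (↑A : Set Ordinal) ∨ sInf (↑A : Set Ordinal) = 0 := by
    intro A _ _
    rw [hf]
    by_cases h : ((codeD P z one (vOf κ.ord g hg A)) : Ordinal) < sInf (↑A : Set Ordinal)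
    · left; simpa only [if_pos h] using h
    · simp only [if_neg h]
      rcases eq_or_ne (sInf (↑A : Set Ordinal)) 0 with h0 | h0
      · right; exact h0
      · left; exact pos_iff_ne_zero.2 h0
  obtain ⟨S, hS, c, hc⟩ := hin f hreg
  -- the infinite set B
  set B := S ∩ Cset κ P with hB
  have hBsub : B ⊆ Set.Iio κ.ord := fun b hb => hS.1 hb.1
  have hBinf : B.Infinite := stat_inter_infinite hlam hS hC
  have hBio : ∀ γ < κ.ord, (B ∩ Set.Ioi γ).Infinite := by
    intro γ hγ
    apply inf_of_unb hlam _ (fun b hb => hBsub hb.1)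
    intro β hβ
    have hm : max β γ < κ.ord := by
      rcases max_cases β γ with ⟨h1, _⟩ | ⟨h1, _⟩ <;> rw [h1] <;> assumption
    obtain ⟨b, hb, hblt⟩ := stat_meets_unb hlam hS hC (max β γ) hm
    exact ⟨b, ⟨hb, lt_of_le_of_lt (le_max_right _ _) hblt⟩,
      lt_of_le_of_lt (le_max_left _ _) hblt⟩
  -- construction of a witness set A from a tuple x
  have build : ∀ (x y : Fin k → Ordinal), (∀ i, x i ∈ B) → g x = y →
      (⨆ i, y i) < (⨅ i, x i) →
      ∃ (A : Finset Ordinal) (hcard : A.card = k) (σ : Fin k → Fin k),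
        ↑A ⊆ S ∧ sInf (↑A : Set Ordinal) = (⨅ i, x i) ∧ ((⨅ i, x i) ∈ Cset κ P) ∧
        xOf A hcard σ = x ∧
        (∀ i, (σ i : ℕ) =
          ((Finset.univ.filter (fun j => x j < x i)).image x).card) := by
    intro x y hxB hgx hreg2
    have hne : Nonempty (Fin k) := ⟨⟨0, hk⟩⟩
    set I : Finset Ordinal := Finset.univ.image x with hI
    have hxI : ∀ i : Fin k, x i ∈ I := fun i => by
      rw [hI]; exact Finset.mem_image_of_mem x (Finset.mem_univ i)
    have hIne : I.Nonempty := ⟨x (Classical.arbitrary _), hxI _⟩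
    have hIB : ∀ b ∈ I, b ∈ B := by
      intro b hb
      rw [hI] at hb
      obtain ⟨i, -, rfl⟩ := Finset.mem_image.1 hb
      exact hxB i
    set M := I.max' hIne with hM
    have hMB : M ∈ B := hIB _ (I.max'_mem hIne)
    have hMlt : M < κ.ord := hBsub hMB
    have hm : I.card ≤ k := le_trans Finset.card_image_le (by simp)
    obtain ⟨t, htsub, htcard⟩ := (hBio M hMlt).exists_subset_card_eq (k - I.card)
    have hdisj : Disjoint I t := by
      rw [Finset.disjoint_left]
      intro b hbI hbt
      exact absurd (I.le_max' b hbI) (not_le.2 (htsub hbt).2)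
    set A : Finset Ordinal := I ∪ t with hA
    have hcard : A.card = k := by
      rw [hA, Finset.card_union_of_disjoint hdisj, htcard]
      omega
    have hAS : ↑A ⊆ S := by
      intro b hb
      rw [hA] at hb
      rcases Finset.mem_union.1 (by exact_mod_cast hb) with h | h
      · exact (hIB _ h).1
      · exact ((htsub h).1).1
    have hxmem : ∀ i, x i ∈ A := by
      intro i
      rw [hA]
      exact Finset.mem_union_left _ (hxI i)
    obtain ⟨i0, hi0eq, hi0min⟩ := iInf_attained hk x
    have hAne : A.Nonempty := ⟨x i0, hxmem i0⟩
    have hminA : A.min' hAne = x i0 := by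
      apply le_antisymm
      · exact A.min'_le _ (hxmem i0)
      · apply Finset.le_min'
        intro b hb
        rw [hA] at hb
        rcases Finset.mem_union.1 hb with h | h
        · rw [hI] at h
          obtain ⟨j, -, rfl⟩ := Finset.mem_image.1 h
          exact hi0min j
        · exact le_trans (I.le_max' _ (hxI i0)) (le_of_lt (htsub h).2)
    have hsinf : sInf (↑A : Set Ordinal) = (⨅ i, x i) := by
      rw [sInf_coe_finset A hAne, hminA, hi0eq]
    have hCmem : (⨅ i, x i) ∈ Cset κ P := by
      rw [← hi0eq]
      exact (hxB i0).2
    set σ : Fin k → Fin k := fun i => (A.orderIsoOfFin hcard).symm ⟨x i, hxmem i⟩ with hσ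
    have hxof : xOf A hcard σ = x := by
      funext i
      rw [Stmt16Aux.xOf, hσ]
      simp only [OrderIso.apply_symm_apply]
    refine ⟨A, hcard, σ, hAS, hsinf, hCmem, hxof, ?_⟩
    intro i
    have hrank := rank_orderIsoOfFin A hcard (σ i)
    have happ : ((A.orderIsoOfFin hcard) (σ i) : Ordinal) = x i := by
      rw [hσ]
      simp only [OrderIso.apply_symm_apply]
    rw [happ] at hrank
    rw [← hrank]
    congr 1
    -- A.filter (· < x i) = image over filter
    have h1 : A.filter (fun b => b < x i) = I.filter (fun b => b < x i) := by
      rw [hA, Finset.filter_union]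
      have h2 : t.filter (fun b => b < x i) = ∅ := by
        apply Finset.filter_false_of_mem
        intro b hb
        have hxM : x i ≤ M := I.le_max' _ (hxI i)
        exact not_lt.2 (le_of_lt (lt_of_le_of_lt hxM (htsub hb).2))
      rw [h2, Finset.union_empty]
    rw [h1, hI]
    ext b
    simp only [Finset.mem_filter, Finset.mem_image, Finset.mem_univ, true_and]
    constructor
    · rintro ⟨⟨j, hj⟩, hlt⟩
      exact ⟨j, by rw [hj]; exact hlt, hj⟩
    · rintro ⟨j, hlt, rfl⟩
      exact ⟨⟨j, rfl⟩, hlt⟩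
  -- the main injectivity fact
  have main : ∀ (y₁ y₂ x₁ x₂ : Fin k → Ordinal),
      (∀ i, x₁ i ∈ B) → g x₁ = y₁ → (⨆ i, y₁ i) < (⨅ i, x₁ i) →
      (∀ i, x₂ i ∈ B) → g x₂ = y₂ → (⨆ i, y₂ i) < (⨅ i, x₂ i) →
      (∀ i j, x₁ i < x₁ j ↔ x₂ i < x₂ j) → y₁ = y₂ := by
    intro y₁ y₂ x₁ x₂ hx1B hg1 hr1 hx2B hg2 hr2 hpat
    have heq : ∀ i j, x₁ i = x₁ j ↔ x₂ i = x₂ j := by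
      intro i j
      constructor
      · intro h
        apply le_antisymm
        · exact not_lt.1 (fun hlt => absurd ((hpat j i).2 hlt) (by rw [h]; exact lt_irrefl _))
        · exact not_lt.1 (fun hlt => absurd ((hpat i j).2 hlt) (by rw [h]; exact lt_irrefl _))
      · intro h
        apply le_antisymm
        · exact not_lt.1 (fun hlt => absurd ((hpat j i).1 hlt) (by rw [h]; exact lt_irrefl _))
        · exact not_lt.1 (fun hlt => absurd ((hpat i j).1 hlt) (by rw [h]; exact lt_irrefl _))
    obtain ⟨A₁, hcard₁, σ₁, hAS₁, hsinf₁, hCmem₁, hxof₁, hσv₁⟩ := build x₁ y₁ hx1B hg1 hr1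
    obtain ⟨A₂, hcard₂, σ₂, hAS₂, hsinf₂, hCmem₂, hxof₂, hσv₂⟩ := build x₂ y₂ hx2B hg2 hr2
    -- the position functions coincide
    have hσeq : σ₁ = σ₂ := by
      funext i
      apply Fin.ext
      rw [hσv₁ i, hσv₂ i]
      have hJ : (Finset.univ.filter (fun j => x₁ j < x₁ i)) =
          (Finset.univ.filter (fun j => x₂ j < x₂ i)) := by
        apply Finset.filter_congr
        intro j _
        exact hpat j i
      rw [hJ]
      exact image_card_eq x₁ x₂ heq _
    -- each f Aₗ computes the code
    have hval : ∀ (A : Finset Ordinal) (x : Fin k → Ordinal), A.card = k → ↑A ⊆ S →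
        sInf (↑A : Set Ordinal) = (⨅ i, x i) → ((⨅ i, x i) ∈ Cset κ P) →
        ((codeD P z one (vOf κ.ord g hg A)) : Ordinal) = c := by
      intro A x hcard hAS hsinf hCmem
      have hbound : ((codeD P z one (vOf κ.ord g hg A)) : Ordinal) < sInf (↑A : Set Ordinal) := by
        rw [hsinf]
        apply codeD_bound P z one
        · exact lt_trans zero_lt_one hCmem.2.1
        · exact hCmem.2.1
        · exact hCmem.2.2
        · intro σ yy hy i
          have := vOf_bound κ.ord g hg A σ yy hy i
          rwa [hsinf] at this
      have := hc A hcard hAS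
      rw [hf] at this
      simp only [if_pos hbound] at this
      exact this
    have hv1 : ((codeD P z one (vOf κ.ord g hg A₁)) : Ordinal) = c :=
      hval A₁ x₁ hcard₁ hAS₁ hsinf₁ hCmem₁
    have hv2 : ((codeD P z one (vOf κ.ord g hg A₂)) : Ordinal) = c :=
      hval A₂ x₂ hcard₂ hAS₂ hsinf₂ hCmem₂
    have hcode : codeD P z one (vOf κ.ord g hg A₁) = codeD P z one (vOf κ.ord g hg A₂) :=
      Subtype.ext (hv1.trans hv2.symm)
    have hveq : vOf κ.ord g hg A₁ = vOf κ.ord g hg A₂ := codeD_inj P z one hzo _ _ hcode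
    -- evaluate both tables at σ₁
    have hx1lt : ∀ i, x₁ i < κ.ord := fun i => hBsub (hx1B i)
    have hx2lt : ∀ i, x₂ i < κ.ord := fun i => hBsub (hx2B i)
    have hreg2₁ : (⨆ i, g x₁ i) < sInf (↑A₁ : Set Ordinal) := by
      rw [hsinf₁, hg1]; exact hr1
    have hreg2₂ : (⨆ i, g x₂ i) < sInf (↑A₂ : Set Ordinal) := by
      rw [hsinf₂, hg2]; exact hr2
    have he1 : vOf κ.ord g hg A₁ σ₁ = some (fun i => ⟨g x₁ i, hg x₁ hx1lt i⟩) :=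
      vOf_eval κ.ord g hg A₁ hcard₁ σ₁ x₁ hxof₁ hx1lt hreg2₁
    have he2 : vOf κ.ord g hg A₂ σ₂ = some (fun i => ⟨g x₂ i, hg x₂ hx2lt i⟩) :=
      vOf_eval κ.ord g hg A₂ hcard₂ σ₂ x₂ hxof₂ hx2lt hreg2₂
    have : some (fun i => (⟨g x₁ i, hg x₁ hx1lt i⟩ : ↥(Set.Iio κ.ord))) =
        some (fun i => (⟨g x₂ i, hg x₂ hx2lt i⟩ : ↥(Set.Iio κ.ord))) := by
      rw [← he1, ← he2, hveq, hσeq]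
    have hfn := Option.some.inj this
    funext i
    have := congrFun hfn i
    rw [← hg1, ← hg2]
    exact congrArg Subtype.val this
  -- wrap up : inject the regressive value set into the quotient
  set R := {y : Fin k → Ordinal | ∃ x : Fin k → Ordinal, (∀ i, x i ∈ B) ∧
      g x = y ∧ (⨆ i, y i) < ⨅ i, x i} with hR
  set r : (Fin k → ℕ) → (Fin k → ℕ) → Prop :=
    fun x y => ∀ i j, x i < x j ↔ y i < y j with hr
  have hrequiv : Equivalence r := by
    constructor
    · intro x i j; exact Iff.rfl
    · intro x y h i j; exact (h i j).symm
    · intro x y zz h1 h2 i j; exact (h1 i j).trans (h2 i j)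
  haveI hQfin : Finite (Quot r) := finite_quot
  set Φ : ↥R → Quot r := fun y => Quot.mk r (pat (y.2.choose)) with hΦ
  have hΦinj : Function.Injective Φ := by
    intro y₁ y₂ h
    obtain ⟨hw1B, hw1g, hw1r⟩ := y₁.2.choose_spec
    obtain ⟨hw2B, hw2g, hw2r⟩ := y₂.2.choose_spec
    rw [hΦ] at h
    simp only at h
    have hEqv := Quot.eq.1 h
    have hrel : r (pat (y₁.2.choose)) (pat (y₂.2.choose)) := hrequiv.eqvGen_iff.1 hEqv
    have hpat : ∀ i j, y₁.2.choose i < y₁.2.choose j ↔ y₂.2.choose i < y₂.2.choose j := by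
      intro i j
      rw [← pat_lt_iff (y₁.2.choose) i j, ← pat_lt_iff (y₂.2.choose) i j]
      exact hrel i j
    apply Subtype.ext
    exact main y₁.1 y₂.1 _ _ hw1B hw1g hw1r hw2B hw2g hw2r hpat
  have hRfinite : Finite ↥R := Finite.of_injective Φ hΦinj
  have hfin : R.Finite := Set.finite_coe_iff.1 hRfinite
  refine ⟨B, hBinf, hBsub, hfin, ?_⟩
  have hcardle : Nat.card ↥R ≤ Nat.card (Quot r) := Nat.card_le_card_of_injective Φ hΦinj
  have hot : ot k = Nat.card (Quot r) := rfl
  rw [← Nat.card_coe_set_eq, hot]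
  exact hcardle
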